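/- Let c ∈ ℝ, A ∈ ℝ, ψ : V → ℝ with A ≤ ψ_i for all i, and suppose u minimizes the functional I(f) = (1/2)·Σ_{{i,j}∈E} ω_{ij}(f_i − f_j)² + c·Σ_{i∈V} μ_i f_i − Σ_{i∈V} μ_i h_i e^{f_i} (first sum over unordered edges) over K = {f : V → ℝ : A ≤ f_i ≤ ψ_i for all i}, and that A < u_i < ψ_i for every i (u is interior to K). Then u solves the Kazdan–Warner equation: (Δu)_i = c − h_i·e^{u_i} for all i ∈ V. -/

import Mathlib

/-- The graph Laplacian: `(Δ f)_i = (1/μ_i) ∑_{j ∼ i} ω_{ij} (f_j - f_i)`. -/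
noncomputable def glap {V : Type*} [Fintype V] (G : SimpleGraph V) [DecidableRel G.Adj]
    (μ : V → ℝ) (ω : V → V → ℝ) (f : V → ℝ) (i : V) : ℝ :=
  (1 / μ i) * ∑ j ∈ G.neighborFinset i, ω i j * (f j - f i)

/-- The functional `I(f) = (1/2) ∑_{{i,j} ∈ E} ω_{ij}(f_i - f_j)² + c ∑_i μ_i f_i
- ∑_i μ_i h_i e^{f_i}`.  Since `ω` is symmetric, the sum over unordered edges equals half
the sum over ordered adjacent pairs, whence the factor `1/4` below. -/
noncomputable def kwEnergy {V : Type*} [Fintype V] (G : SimpleGraph V) [DecidableRel G.Adj]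
    (μ : V → ℝ) (ω : V → V → ℝ) (c : ℝ) (h : V → ℝ) (f : V → ℝ) : ℝ :=
  (1 / 4) * ∑ i, ∑ j ∈ G.neighborFinset i, ω i j * (f i - f j) ^ 2
    + c * ∑ i, μ i * f i - ∑ i, μ i * h i * Real.exp (f i)

set_option maxHeartbeats 1000000 in
/-- If `u` minimizes the functional `I` over `K = {f : A ≤ f ≤ ψ}` and `u` is interior to
`K` (i.e. `A < u_i < ψ_i` for all `i`), then `u` solves the Kazdan–Warner equation
`Δ u = c - h e^u`. -/
theorem stmt_13 {V : Type*} [Fintype V] (G : SimpleGraph V) [DecidableRel G.Adj]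
    (hconn : G.Connected)
    (μ : V → ℝ) (hμ : ∀ i, 0 < μ i)
    (ω : V → V → ℝ) (hsym : ∀ i j, ω i j = ω j i)
    (hω : ∀ i j, G.Adj i j → 0 < ω i j)
    (h : V → ℝ) (c : ℝ) (A : ℝ) (ψ : V → ℝ)
    (hAψ : ∀ i, A ≤ ψ i)
    (u : V → ℝ)
    (huK : ∀ i, A ≤ u i ∧ u i ≤ ψ i)
    (hmin : ∀ f : V → ℝ, (∀ i, A ≤ f i ∧ f i ≤ ψ i) →
      kwEnergy G μ ω c h u ≤ kwEnergy G μ ω c h f)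
    (hint : ∀ i, A < u i ∧ u i < ψ i) :
    ∀ i, glap G μ ω u i = c - h i * Real.exp (u i) := by
  classical
  intro i₀
  set δ : V → ℝ := fun j => if j = i₀ then 1 else 0 with hδdef
  set F : ℝ → ℝ := fun t =>
    (1 / 4) * ∑ i, ∑ j ∈ G.neighborFinset i,
        ω i j * ((u i + t * δ i) - (u j + t * δ j)) ^ 2
      + c * ∑ i, μ i * (u i + t * δ i)
      - ∑ i, μ i * h i * Real.exp (u i + t * δ i) with hFdef
  -- derivative of F at 0
  have hder : HasDerivAt F
      ((1/4) * ∑ i, ∑ j ∈ G.neighborFinset i,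
          ω i j * (2 * (u i - u j) * (δ i - δ j))
        + c * ∑ i, μ i * δ i
        - ∑ i, μ i * h i * (Real.exp (u i) * δ i)) 0 := by
    rw [hFdef]
    apply HasDerivAt.sub
    · apply HasDerivAt.add
      · apply HasDerivAt.const_mul
        apply HasDerivAt.fun_sum; intro i _
        apply HasDerivAt.fun_sum; intro j _
        apply HasDerivAt.const_mul
        have h1 : HasDerivAt (fun t : ℝ => (u i + t * δ i) - (u j + t * δ j))
            (δ i - δ j) 0 := by
          simpa using (((hasDerivAt_id (0:ℝ)).mul_const (δ i)).const_add (u i)).fun_sub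
            (((hasDerivAt_id (0:ℝ)).mul_const (δ j)).const_add (u j))
        simpa using h1.fun_pow 2
      · apply HasDerivAt.const_mul
        apply HasDerivAt.fun_sum; intro i _
        simpa using (((hasDerivAt_id (0:ℝ)).mul_const (δ i)).const_add (u i)).const_mul (μ i)
    · apply HasDerivAt.fun_sum; intro i _
      simpa using ((((hasDerivAt_id (0:ℝ)).mul_const (δ i)).const_add (u i)).exp).const_mul (μ i * h i)
  -- F has a local minimum at 0
  have hε : 0 < min (u i₀ - A) (ψ i₀ - u i₀) := by
    have := hint i₀; exact lt_min (by linarith [this.1]) (by linarith [this.2])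
  have hF0 : F 0 = kwEnergy G μ ω c h u := by
    simp [hFdef, kwEnergy]
  have hmin' : IsLocalMin F 0 := by
    filter_upwards [Metric.ball_mem_nhds (0:ℝ) hε] with t ht
    rw [hF0]
    have hmem : ∀ i, A ≤ u i + t * δ i ∧ u i + t * δ i ≤ ψ i := by
      intro i
      rw [Real.ball_eq_Ioo] at ht
      obtain ⟨ht1, ht2⟩ := ht
      by_cases hi : i = i₀
      · subst hi
        simp only [hδdef, if_pos rfl, mul_one]
        constructor
        · have : -(u i - A) < t := by
            have := min_le_left (u i - A) (ψ i - u i); linarith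
          linarith
        · have : t < ψ i - u i := by
            have := min_le_right (u i - A) (ψ i - u i); linarith
          linarith
      · simp only [hδdef, if_neg hi, mul_zero, add_zero]
        exact huK i
    have := hmin (fun i => u i + t * δ i) hmem
    simpa [kwEnergy, hFdef] using this
  have hD0 : (1/4) * ∑ i, ∑ j ∈ G.neighborFinset i,
          ω i j * (2 * (u i - u j) * (δ i - δ j))
        + c * ∑ i, μ i * δ i
        - ∑ i, μ i * h i * (Real.exp (u i) * δ i) = 0 := by
    rw [← hder.deriv]
    exact hmin'.deriv_eq_zero
  -- simplify the three sums
  have hL : ∑ i, μ i * δ i = μ i₀ := by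
    simp [hδdef, mul_ite, Finset.sum_ite_eq']
  have hE : ∑ i, μ i * h i * (Real.exp (u i) * δ i) = μ i₀ * h i₀ * Real.exp (u i₀) := by
    simp [hδdef, mul_ite, Finset.sum_ite_eq']
  have hQ : ∑ i, ∑ j ∈ G.neighborFinset i, ω i j * (2 * (u i - u j) * (δ i - δ j))
      = 4 * ∑ j ∈ G.neighborFinset i₀, ω i₀ j * (u i₀ - u j) := by
    have hsplit : ∀ i j : V, ω i j * (2 * (u i - u j) * (δ i - δ j))
        = (2 * ω i j * (u i - u j)) * δ i - (2 * ω i j * (u i - u j)) * δ j := by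
      intro i j; ring
    simp_rw [hsplit, Finset.sum_sub_distrib]
    have hT1 : ∑ i, ∑ j ∈ G.neighborFinset i, (2 * ω i j * (u i - u j)) * δ i
        = ∑ j ∈ G.neighborFinset i₀, 2 * ω i₀ j * (u i₀ - u j) := by
      simp_rw [← Finset.sum_mul]
      simp [hδdef, mul_ite, Finset.sum_ite_eq']
    have hT2 : ∑ i, ∑ j ∈ G.neighborFinset i, (2 * ω i j * (u i - u j)) * δ j
        = ∑ i ∈ G.neighborFinset i₀, 2 * ω i i₀ * (u i - u i₀) := by
      have hinner : ∀ i : V, ∑ j ∈ G.neighborFinset i, (2 * ω i j * (u i - u j)) * δ j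
          = if G.Adj i₀ i then 2 * ω i i₀ * (u i - u i₀) else 0 := by
        intro i
        simp [hδdef, mul_ite, Finset.sum_ite_eq', SimpleGraph.mem_neighborFinset, G.adj_comm]
      simp_rw [hinner, ← Finset.sum_filter]
      congr 1
      ext x
      simp [SimpleGraph.mem_neighborFinset]
    rw [hT1, hT2]
    rw [← Finset.sum_sub_distrib, Finset.mul_sum]
    apply Finset.sum_congr rfl
    intro j hj
    rw [hsym i₀ j]
    ring
  rw [hQ, hL, hE] at hD0
  have hμ0 : μ i₀ ≠ 0 := ne_of_gt (hμ i₀)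
  have hS : ∑ j ∈ G.neighborFinset i₀, ω i₀ j * (u j - u i₀)
      = -∑ j ∈ G.neighborFinset i₀, ω i₀ j * (u i₀ - u j) := by
    rw [← Finset.sum_neg_distrib]; apply Finset.sum_congr rfl; intro j _; ring
  rw [glap, hS]
  have : ∑ j ∈ G.neighborFinset i₀, ω i₀ j * (u i₀ - u j)
      = μ i₀ * h i₀ * Real.exp (u i₀) - c * μ i₀ := by linarith
  rw [this]
  field_simp
  ring
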